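/- For every complex u with |u|²·W(x,x′) < 1 for all adjacent pairs x, x′, and every vertex x, the series Σ_{n≥0} u^{2n} B_{2n}x and Σ_{n≥0} u^{2n+1} B_{2n+1}x converge in ℓ²(VX) and satisfy: Σ_{n≥0} u^{2n} B_{2n}x = x + Σ_{x′∼x} ( u²W(x,x′) / (1 − u²W(x,x′)) ) x, and Σ_{n≥0} u^{2n+1} B_{2n+1}x = Σ_{x′∼x} ( u·w(x,x′) / (1 − u²W(x,x′)) ) x′. -/

import Mathlib

/- Formalization of a statement from "Ihara Zeta functions of infinite weighted graphs"
   (A. Deitmar).  Context: `X` is a connected graph of bounded valency, `w` is a positive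
   weight function on oriented edges (darts) with finite total weight. -/

open scoped BigOperators
open SimpleGraph

attribute [local instance 10] Classical.propDecidable
noncomputable local instance (priority := 10) {α : Type*} : DecidableEq α := Classical.decEq _

variable {V : Type*}

/-- The standard basis vector of `ℓ²(ι)` at `i`. -/
noncomputable def bv {ι : Type*} (i : ι) : lp (fun _ : ι => ℂ) 2 := lp.single 2 i 1

/-- For adjacent vertices `x, y`, `dartW G w h = w(x,y)·w(y,x)`, the weight `W(x,y)` of the
underlying edge. -/
noncomputable def dartW (G : SimpleGraph V) (w : G.Dart → ℝ) {x y : V} (h : G.Adj x y) : ℝ :=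
  w ⟨(x, y), h⟩ * w ⟨(y, x), h.symm⟩

/-- A path of length `m` in the graph `G`: a sequence of adjacent vertices
`x₀, x₁, …, x_m` (encoded as a function `ℕ → V` which is constant from index `m` on). -/
structure GPath (G : SimpleGraph V) (m : ℕ) where
  f : ℕ → V
  adj : ∀ i, i < m → G.Adj (f i) (f (i + 1))
  stable : ∀ i, m ≤ i → f i = f m

/-- The weight `w(p)` of a path: the product of the weights of its oriented edges. -/
noncomputable def GPath.wgt {G : SimpleGraph V} {m : ℕ} (w : G.Dart → ℝ) (p : GPath G m) : ℝ :=
  ∏ i : Fin m, w ⟨(p.f i, p.f (i + 1)), p.adj i i.isLt⟩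

/-- A path is reduced (has no backtracking) iff `x_{j-1} ≠ x_{j+1}` for all `j`. -/
def GPath.Reduced {G : SimpleGraph V} {m : ℕ} (p : GPath G m) : Prop :=
  ∀ i, i + 2 ≤ m → p.f i ≠ p.f (i + 2)

/-- The diagonal of an operator on `ℓ²(ι)` with respect to the standard orthonormal basis
is absolutely summable. -/
def DiagAbsSummable {ι : Type*}
    (S : lp (fun _ : ι => ℂ) 2 →L[ℂ] lp (fun _ : ι => ℂ) 2) : Prop :=
  Summable fun i : ι => ‖S (bv i) i‖

/-- The trace of an operator on `ℓ²(ι)`: the sum of its diagonal matrix entries with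
respect to the standard orthonormal basis. -/
noncomputable def diagTr {ι : Type*}
    (S : lp (fun _ : ι => ℂ) 2 →L[ℂ] lp (fun _ : ι => ℂ) 2) : ℂ :=
  ∑' i : ι, S (bv i) i

/-- For `u` with `|u|²W(x,x′) < 1` for all adjacent pairs, the even and odd
parts of `B(u)` applied to a basis vector converge and are given by the explicit formulas of
Lemma 2.3. -/
theorem statement_6 (G : SimpleGraph V) (hconn : G.Connected)
    (M : ℝ) (hM : 0 < M)
    (hval : ∀ x : V, (G.neighborSet x).Finite ∧ ((G.neighborSet x).ncard : ℝ) ≤ M)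
    (w : G.Dart → ℝ) (hw : ∀ e, 0 < w e) (hsum : Summable w)
    (B : ℕ → (lp (fun _ : V => ℂ) 2 →L[ℂ] lp (fun _ : V => ℂ) 2))
    (hB0 : B 0 = 1)
    (hBev : ∀ (n : ℕ), 1 ≤ n → ∀ x y : V, B (2 * n) (bv x) y
      = if y = x then ((∑' x' : G.neighborSet x, dartW G w x'.2 ^ n : ℝ) : ℂ) else 0)
    (hBodd : ∀ (n : ℕ) (x y : V), B (2 * n + 1) (bv x) y
      = if h : G.Adj x y then ((dartW G w h ^ n * w ⟨(x, y), h⟩ : ℝ) : ℂ) else 0)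
    (u : ℂ) (hu : ∀ ⦃x y : V⦄ (h : G.Adj x y), ‖u‖ ^ 2 * dartW G w h < 1) :
    ∀ x : V,
      (∃ v : lp (fun _ : V => ℂ) 2,
        HasSum (fun n : ℕ => u ^ (2 * n) • B (2 * n) (bv x)) v ∧
        ∀ y : V, v y = if y = x then
            1 + ∑' x' : G.neighborSet x,
              u ^ 2 * (dartW G w x'.2 : ℂ) / (1 - u ^ 2 * (dartW G w x'.2 : ℂ))
          else 0) ∧
      (∃ v : lp (fun _ : V => ℂ) 2,
        HasSum (fun n : ℕ => u ^ (2 * n + 1) • B (2 * n + 1) (bv x)) v ∧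
        ∀ y : V, v y = if h : G.Adj x y then
            u * (w ⟨(x, y), h⟩ : ℂ) / (1 - u ^ 2 * (dartW G w h : ℂ))
          else 0) := by
  intro x
  haveI : Fintype (G.neighborSet x) := (hval x).1.fintype
  set z : G.neighborSet x → ℂ := fun x' => u ^ 2 * (dartW G w x'.2 : ℂ) with hzdef
  have hWpos : ∀ {a b : V} (h : G.Adj a b), 0 < dartW G w h := fun h =>
    mul_pos (hw _) (hw _)
  have hz : ∀ x' : G.neighborSet x, ‖z x'‖ < 1 := by
    intro x'
    have : ‖z x'‖ = ‖u‖ ^ 2 * dartW G w x'.2 := by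
      rw [hzdef]
      simp [norm_mul, Complex.norm_real, abs_of_pos (hWpos x'.2), norm_pow]
    rw [this]
    exact hu x'.2
  have hbv : ∀ (a y : V), (bv a : ∀ _ : V, ℂ) y = if y = a then 1 else 0 := by
    intro a y
    simp only [bv, lp.single_apply]
    split <;> simp_all
  constructor
  · -- even part
    set d : ℕ → ℂ := fun n => if n = 0 then 1 else ∑ x' : G.neighborSet x, z x' ^ n with hddef
    have hfun : ∀ n : ℕ, u ^ (2 * n) • B (2 * n) (bv x) = d n • bv x := by
      intro n
      rcases Nat.eq_zero_or_pos n with hn | hn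
      · subst hn; simp [hddef, hB0]
      · apply lp.ext
        funext y
        rw [lp.coeFn_smul, lp.coeFn_smul]
        simp only [Pi.smul_apply, smul_eq_mul, hBev n hn x y, hbv]
        by_cases hy : y = x
        · simp only [hy, eq_self_iff_true, if_true, mul_one, tsum_fintype]
          rw [hddef]
          simp only [if_neg hn.ne']
          push_cast
          rw [Finset.mul_sum]
          refine Finset.sum_congr rfl fun x' _ => ?_
          rw [hzdef]
          simp only
          rw [mul_pow, ← pow_mul]
        · simp [hy]
    have hgeo : ∀ x' : G.neighborSet x,
        HasSum (fun n : ℕ => z x' ^ (n + 1)) (z x' / (1 - z x')) := by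
      intro x'
      have h1 := (hasSum_geometric_of_norm_lt_one (hz x')).mul_right (z x')
      simpa [pow_succ, div_eq_mul_inv, mul_comm] using h1
    have hT : HasSum (fun n : ℕ => ∑ x' : G.neighborSet x, z x' ^ (n + 1))
        (∑ x' : G.neighborSet x, z x' / (1 - z x')) :=
      hasSum_sum fun x' _ => hgeo x'
    have hd : HasSum d (1 + ∑ x' : G.neighborSet x, z x' / (1 - z x')) := by
      have h3 : (fun n => d (n + 1)) = fun n : ℕ => ∑ x' : G.neighborSet x, z x' ^ (n + 1) := by
        funext n; simp [hddef]
      have := (hasSum_nat_add_iff (f := d) 1).mp (by rw [h3]; exact hT)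
      simpa [hddef, Finset.sum_range_one, add_comm] using this
    refine ⟨(1 + ∑ x' : G.neighborSet x, z x' / (1 - z x')) • bv x,
      (hd.smul_const (bv x)).congr_fun hfun, ?_⟩
    intro y
    rw [lp.coeFn_smul]
    simp only [Pi.smul_apply, smul_eq_mul, hbv]
    by_cases hy : y = x
    · simp only [hy, eq_self_iff_true, if_true, mul_one, tsum_fintype]
      rfl
    · simp [hy]
  · -- odd part
    set c : G.neighborSet x → ℂ := fun x' => (w ⟨(x, x'.1), x'.2⟩ : ℂ) with hcdef
    have hfun : ∀ n : ℕ, u ^ (2 * n + 1) • B (2 * n + 1) (bv x)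
        = ∑ x' : G.neighborSet x, (u * c x' * z x' ^ n) • bv (x' : V) := by
      intro n
      apply lp.ext
      funext y
      rw [lp.coeFn_smul, lp.coeFn_sum]
      simp only [Pi.smul_apply, smul_eq_mul, hBodd n x y, Finset.sum_apply]
      by_cases h : G.Adj x y
      · rw [dif_pos h]
        rw [Finset.sum_eq_single_of_mem (⟨y, h⟩ : G.neighborSet x) (Finset.mem_univ _)]
        · rw [lp.coeFn_smul]
          simp only [Pi.smul_apply, smul_eq_mul, hbv, eq_self_iff_true, if_true, mul_one]
          push_cast
          rw [hzdef, hcdef]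
          simp only
          rw [mul_pow, ← pow_mul]
          ring
        · intro b _ hb
          rw [lp.coeFn_smul]
          simp only [Pi.smul_apply, smul_eq_mul, hbv]
          have : y ≠ (b : V) := fun hyb => hb (Subtype.ext hyb.symm)
          simp [this]
      · rw [dif_neg h, mul_zero]
        refine (Finset.sum_eq_zero fun b _ => ?_).symm
        rw [lp.coeFn_smul]
        simp only [Pi.smul_apply, smul_eq_mul, hbv]
        have : y ≠ (b : V) := fun hyb => h (hyb ▸ b.2)
        simp [this]
    have hgeo : ∀ x' : G.neighborSet x,
        HasSum (fun n : ℕ => (u * c x' * z x' ^ n) • bv (x' : V))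
          ((u * c x' * (1 - z x')⁻¹) • bv (x' : V)) := by
      intro x'
      exact ((hasSum_geometric_of_norm_lt_one (hz x')).mul_left (u * c x')).smul_const _
    have hsumv : HasSum (fun n : ℕ => ∑ x' : G.neighborSet x, (u * c x' * z x' ^ n) • bv (x' : V))
        (∑ x' : G.neighborSet x, (u * c x' * (1 - z x')⁻¹) • bv (x' : V)) :=
      hasSum_sum fun x' _ => hgeo x'
    refine ⟨_, hsumv.congr_fun hfun, ?_⟩
    intro y
    rw [lp.coeFn_sum]
    simp only [Finset.sum_apply]
    by_cases h : G.Adj x y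
    · rw [dif_pos h]
      rw [Finset.sum_eq_single_of_mem (⟨y, h⟩ : G.neighborSet x) (Finset.mem_univ _)]
      · rw [lp.coeFn_smul]
        simp only [Pi.smul_apply, smul_eq_mul, hbv, eq_self_iff_true, if_true, mul_one]
        rw [hzdef, hcdef, div_eq_mul_inv]
      · intro b _ hb
        rw [lp.coeFn_smul]
        simp only [Pi.smul_apply, smul_eq_mul, hbv]
        have : y ≠ (b : V) := fun hyb => hb (Subtype.ext hyb.symm)
        simp [this]
    · rw [dif_neg h]
      refine Finset.sum_eq_zero fun b _ => ?_
      rw [lp.coeFn_smul]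
      simp only [Pi.smul_apply, smul_eq_mul, hbv]
      have : y ≠ (b : V) := fun hyb => h (hyb ▸ b.2)
      simp [this]
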